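/- Let (X,d) be a metric space, μ a Borel measure on X, x₀ ∈ X, N > 1 and k > 0, and suppose μ(B_ρ(x₀)) = k ω_N ρ^N for all ρ > 0. Then the Gaussian u_λ(x) = e^{−λ d(x₀,x)²} satisfies, for every λ > 0, the identity 2λ ∫_X d(x₀,x)² e^{−2λ d(x₀,x)²} dμ(x) = (N/2) ∫_X e^{−2λ d(x₀,x)²} dμ(x); consequently (∫_X 4λ² d(x₀,x)² e^{−2λ d(x₀,x)²} dμ) · (∫_X d(x₀,x)² e^{−2λ d(x₀,x)²} dμ) = (N²/4) · (∫_X e^{−2λ d(x₀,x)²} dμ)². -/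

import Mathlib

open MeasureTheory Set

/-- `ω_N = π^{N/2} / Γ(N/2 + 1)`, the volume of the unit ball in dimension `N`. -/
noncomputable def omegaN (N : ℝ) : ℝ := Real.pi ^ (N / 2) / Real.Gamma (N / 2 + 1)

lemma omegaN_pos {N : ℝ} (hN : 0 < N) : 0 < omegaN N := by
  have h1 : (0:ℝ) < Real.pi ^ (N / 2) := Real.rpow_pos_of_pos Real.pi_pos _
  have h2 : (0:ℝ) < Real.Gamma (N / 2 + 1) := Real.Gamma_pos_of_pos (by linarith)
  exact div_pos h1 h2

/-- continuity of `r ↦ r ^ (N-1)` when `N > 1`. -/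
lemma cont_rpow_sub_one {N : ℝ} (hN : 1 < N) :
    Continuous fun r : ℝ => r ^ (N - 1) :=
  continuous_iff_continuousAt.mpr fun x =>
    Real.continuousAt_rpow_const x _ (Or.inr (by linarith))

lemma map_dist_eq_withDensity {X : Type*} [MetricSpace X]
    [MeasurableSpace X] [BorelSpace X] (μ : Measure X) (x₀ : X)
    (N k : ℝ) (hN : 1 < N) (hk : 0 < k)
    (hcone : ∀ ρ > (0:ℝ), μ (Metric.ball x₀ ρ) = ENNReal.ofReal (k * omegaN N * ρ ^ N)) :
    μ.map (fun x => dist x₀ x) =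
      (volume.restrict (Ioi (0:ℝ))).withDensity
        (fun r => ENNReal.ofReal (k * omegaN N * N * r ^ (N - 1))) := by
  have hNpos : (0:ℝ) < N := by linarith
  have hC₀ : (0:ℝ) < k * omegaN N := mul_pos hk (omegaN_pos hNpos)
  set C₀ := k * omegaN N with hC₀def
  have hf : Measurable fun x : X => dist x₀ x :=
    (continuous_const.dist continuous_id).measurable
  -- value of μ on all balls
  have hball : ∀ ρ : ℝ, μ (Metric.ball x₀ ρ) = ENNReal.ofReal (C₀ * max ρ 0 ^ N) := by
    intro ρ
    rcases le_or_gt ρ 0 with h | h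
    · rw [Metric.ball_eq_empty.mpr h, max_eq_right h, Real.zero_rpow hNpos.ne', mul_zero,
        ENNReal.ofReal_zero, measure_empty]
    · rw [hcone ρ h, max_eq_left h.le]
  -- value of the density measure on Ioo intervals with nonneg endpoints
  have hIoo : ∀ a b : ℝ, 0 ≤ a → a < b →
      (∫⁻ r in Ioo a b, ENNReal.ofReal (C₀ * N * r ^ (N - 1)) ∂volume) =
        ENNReal.ofReal (C₀ * b ^ N - C₀ * a ^ N) := by
    intro a b ha hab
    have hcont : Continuous fun r : ℝ => C₀ * N * r ^ (N - 1) :=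
      continuous_const.mul (cont_rpow_sub_one hN)
    have hint : IntegrableOn (fun r : ℝ => C₀ * N * r ^ (N - 1)) (Ioo a b) volume :=
      (hcont.integrableOn_Icc).mono_set Ioo_subset_Icc_self
    have hnn : 0 ≤ᵐ[volume.restrict (Ioo a b)] fun r : ℝ => C₀ * N * r ^ (N - 1) := by
      filter_upwards [ae_restrict_mem measurableSet_Ioo] with r hr
      have : (0:ℝ) ≤ r := le_trans ha hr.1.le
      positivity
    rw [← ofReal_integral_eq_lintegral_ofReal hint hnn]
    congr 1
    have hval : ∫ r in Ioo a b, C₀ * N * r ^ (N - 1) =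
        C₀ * N * ((b ^ (N - 1 + 1) - a ^ (N - 1 + 1)) / (N - 1 + 1)) := by
      rw [← MeasureTheory.integral_Ioc_eq_integral_Ioo,
        ← intervalIntegral.integral_of_le hab.le, intervalIntegral.integral_const_mul,
        integral_rpow (Or.inl (by linarith))]
    rw [hval]
    have h1 : N - 1 + 1 = N := by ring
    rw [h1]
    field_simp
  refine Measure.ext_of_Ico' _ _ ?_ ?_
  · intro a b hab
    rw [Measure.map_apply hf measurableSet_Ico]
    have hsub : (fun x : X => dist x₀ x) ⁻¹' Ico a b ⊆ Metric.ball x₀ b := by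
      intro x hx; exact Metric.mem_ball'.mpr hx.2
    refine ne_top_of_le_ne_top ?_ (measure_mono hsub)
    rw [hball b]; exact ENNReal.ofReal_ne_top
  · intro a b hab
    rw [Measure.map_apply hf measurableSet_Ico]
    have hpre : (fun x : X => dist x₀ x) ⁻¹' Ico a b =
        Metric.ball x₀ b \ Metric.ball x₀ a := by
      ext x
      simp only [mem_preimage, mem_Ico, mem_diff, Metric.mem_ball', not_lt]
      tauto
    rw [hpre, measure_diff (Metric.ball_subset_ball hab.le)
        Metric.isOpen_ball.measurableSet.nullMeasurableSet
        (by rw [hball a]; exact ENNReal.ofReal_ne_top),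
      hball a, hball b]
    rw [withDensity_apply _ measurableSet_Ico, Measure.restrict_restrict measurableSet_Ico]
    rcases le_or_gt b 0 with hb | hb
    · have hine : Ico a b ∩ Ioi (0:ℝ) = ∅ := by
        ext r; simp only [mem_inter_iff, mem_Ico, mem_Ioi, mem_empty_iff_false, iff_false]
        rintro ⟨⟨_, h2⟩, h3⟩; linarith
      rw [hine, max_eq_right hb, max_eq_right (hab.le.trans hb)]
      simp
    · rcases le_or_gt a 0 with ha | ha
      · have hine : Ico a b ∩ Ioi (0:ℝ) = Ioo 0 b := by
          ext r; simp only [mem_inter_iff, mem_Ico, mem_Ioo, mem_Ioi]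
          constructor
          · rintro ⟨⟨_, h2⟩, h3⟩; exact ⟨h3, h2⟩
          · rintro ⟨h1, h2⟩; exact ⟨⟨le_trans ha h1.le, h2⟩, h1⟩
        rw [hine, hIoo 0 b le_rfl hb, max_eq_left hb.le, max_eq_right ha,
          Real.zero_rpow hNpos.ne', mul_zero, ENNReal.ofReal_zero, tsub_zero, sub_zero]
      · have hine : Ico a b ∩ Ioi (0:ℝ) = Ico a b := by
          apply inter_eq_left.mpr
          intro r hr; exact lt_of_lt_of_le ha hr.1
        have hIco : (∫⁻ r in Ico a b, ENNReal.ofReal (C₀ * N * r ^ (N - 1)) ∂volume) =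
            (∫⁻ r in Ioo a b, ENNReal.ofReal (C₀ * N * r ^ (N - 1)) ∂volume) := by
          exact setLIntegral_congr (MeasureTheory.Ioo_ae_eq_Ico (a := a) (b := b)).symm
        rw [hine, hIco, hIoo a b ha.le hab, max_eq_left hb.le, max_eq_left ha.le,
          ENNReal.ofReal_sub _ (by positivity)]

lemma integral_dist_eq {X : Type*} [MetricSpace X]
    [MeasurableSpace X] [BorelSpace X] (μ : Measure X) (x₀ : X)
    (N k : ℝ) (hN : 1 < N) (hk : 0 < k)
    (hcone : ∀ ρ > (0:ℝ), μ (Metric.ball x₀ ρ) = ENNReal.ofReal (k * omegaN N * ρ ^ N))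
    (φ : ℝ → ℝ) (hφ : Continuous φ) :
    ∫ x, φ (dist x₀ x) ∂μ =
      ∫ r in Ioi (0:ℝ), k * omegaN N * N * r ^ (N - 1) * φ r := by
  have hf : Measurable fun x : X => dist x₀ x :=
    (continuous_const.dist continuous_id).measurable
  rw [← MeasureTheory.integral_map hf.aemeasurable hφ.aestronglyMeasurable,
    map_dist_eq_withDensity μ x₀ N k hN hk hcone]
  have hdw : (fun r : ℝ => ENNReal.ofReal (k * omegaN N * N * r ^ (N - 1))) =
      fun r : ℝ => ((k * omegaN N * N * r ^ (N - 1)).toNNReal : ENNReal) := rfl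
  rw [hdw, integral_withDensity_eq_integral_smul
    (by
      have h : Continuous fun r : ℝ => k * omegaN N * N * r ^ (N - 1) :=
        continuous_const.mul (cont_rpow_sub_one hN)
      exact h.measurable.real_toNNReal) φ]
  refine setIntegral_congr_fun measurableSet_Ioi fun r hr => ?_
  have hnn : (0:ℝ) ≤ k * omegaN N * N * r ^ (N - 1) := by
    have : (0:ℝ) ≤ r := le_of_lt hr
    have hC₀ : (0:ℝ) < k * omegaN N := mul_pos hk (omegaN_pos (by linarith))
    positivity
  simp [NNReal.smul_def, Real.coe_toNNReal _ hnn]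

/-- On an `N`-volume cone at `x₀` with density `k`, the Gaussians `u_λ = e^{-λ d(x₀,·)²}`
satisfy `2λ ∫ d² e^{-2λd²} dμ = (N/2) ∫ e^{-2λd²} dμ`, and consequently they attain
equality in the Heisenberg–Pauli–Weyl uncertainty principle. -/
theorem gaussian_equality_on_volume_cone {X : Type*} [MetricSpace X]
    [MeasurableSpace X] [BorelSpace X] (μ : Measure X) (x₀ : X)
    (N k : ℝ) (hN : 1 < N) (hk : 0 < k)
    (hcone : ∀ ρ > (0:ℝ), μ (Metric.ball x₀ ρ) = ENNReal.ofReal (k * omegaN N * ρ ^ N))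
    (lam : ℝ) (hlam : 0 < lam) :
    2 * lam * ∫ x, dist x₀ x ^ 2 * Real.exp (-2 * lam * dist x₀ x ^ 2) ∂μ =
        (N / 2) * ∫ x, Real.exp (-2 * lam * dist x₀ x ^ 2) ∂μ ∧
      (∫ x, 4 * lam ^ 2 * dist x₀ x ^ 2 * Real.exp (-2 * lam * dist x₀ x ^ 2) ∂μ) *
          (∫ x, dist x₀ x ^ 2 * Real.exp (-2 * lam * dist x₀ x ^ 2) ∂μ) =
        (N ^ 2 / 4) * (∫ x, Real.exp (-2 * lam * dist x₀ x ^ 2) ∂μ) ^ 2 := by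
  have hNpos : (0:ℝ) < N := by linarith
  set C : ℝ := k * omegaN N * N with hC
  have hb : (0:ℝ) < 2 * lam := by linarith
  have hr2 : ∀ r : ℝ, r ^ (2:ℝ) = r ^ 2 := fun r => by
    rw [show (2:ℝ) = ((2:ℕ):ℝ) by norm_num, Real.rpow_natCast]
  -- value of ∫ e^{-2λ d²}
  have hE : ∫ x, Real.exp (-2 * lam * dist x₀ x ^ 2) ∂μ =
      C * ((2 * lam) ^ (-(N - 1 + 1) / 2) * (1 / 2) * Real.Gamma ((N - 1 + 1) / 2)) := by
    rw [integral_dist_eq μ x₀ N k hN hk hcone (fun r => Real.exp (-2 * lam * r ^ 2))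
        (by continuity)]
    have : ∀ r ∈ Ioi (0:ℝ), C * r ^ (N - 1) * Real.exp (-2 * lam * r ^ 2) =
        C * (r ^ (N - 1) * Real.exp (-(2 * lam) * r ^ (2:ℝ))) := by
      intro r hr
      rw [hr2 r]; ring_nf
    rw [setIntegral_congr_fun measurableSet_Ioi this, MeasureTheory.integral_const_mul,
      integral_rpow_mul_exp_neg_mul_rpow two_pos (by linarith) hb]
  -- value of ∫ d² e^{-2λ d²}
  have hD : ∫ x, dist x₀ x ^ 2 * Real.exp (-2 * lam * dist x₀ x ^ 2) ∂μ =
      C * ((2 * lam) ^ (-(N + 1 + 1) / 2) * (1 / 2) * Real.Gamma ((N + 1 + 1) / 2)) := by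
    rw [integral_dist_eq μ x₀ N k hN hk hcone
        (fun r => r ^ 2 * Real.exp (-2 * lam * r ^ 2)) (by continuity)]
    have : ∀ r ∈ Ioi (0:ℝ), C * r ^ (N - 1) * (r ^ 2 * Real.exp (-2 * lam * r ^ 2)) =
        C * (r ^ (N + 1) * Real.exp (-(2 * lam) * r ^ (2:ℝ))) := by
      intro r hr
      have h1 : r ^ (N - 1) * r ^ (2:ℝ) = r ^ (N + 1) := by
        rw [← Real.rpow_add hr]; congr 1; ring
      rw [hr2 r] at h1 ⊢
      rw [show (-2 : ℝ) * lam = -(2 * lam) by ring, ← h1]; ring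
    rw [setIntegral_congr_fun measurableSet_Ioi this, MeasureTheory.integral_const_mul,
      integral_rpow_mul_exp_neg_mul_rpow two_pos (by linarith) hb]
  have hkey : 2 * lam * ∫ x, dist x₀ x ^ 2 * Real.exp (-2 * lam * dist x₀ x ^ 2) ∂μ =
      (N / 2) * ∫ x, Real.exp (-2 * lam * dist x₀ x ^ 2) ∂μ := by
    rw [hE, hD]
    have hG : Real.Gamma ((N + 1 + 1) / 2) = (N / 2) * Real.Gamma (N / 2) := by
      rw [show (N + 1 + 1) / 2 = N / 2 + 1 by ring, Real.Gamma_add_one (by positivity)]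
    have hP : (2 * lam) ^ (-(N + 1 + 1) / 2) =
        (2 * lam) ^ (-(N - 1 + 1) / 2) * (2 * lam)⁻¹ := by
      rw [show -(N + 1 + 1) / 2 = -(N - 1 + 1) / 2 + (-1 : ℝ) by ring,
        Real.rpow_add hb, Real.rpow_neg_one]
    rw [hG, hP, show (N - 1 + 1) / 2 = N / 2 by ring]
    field_simp
  refine ⟨hkey, ?_⟩
  have h3 : ∫ x, 4 * lam ^ 2 * dist x₀ x ^ 2 * Real.exp (-2 * lam * dist x₀ x ^ 2) ∂μ =
      4 * lam ^ 2 * ∫ x, dist x₀ x ^ 2 * Real.exp (-2 * lam * dist x₀ x ^ 2) ∂μ := by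
    rw [← MeasureTheory.integral_const_mul]
    congr 1; funext x; ring
  rw [h3]
  set D := ∫ x, dist x₀ x ^ 2 * Real.exp (-2 * lam * dist x₀ x ^ 2) ∂μ
  set E := ∫ x, Real.exp (-2 * lam * dist x₀ x ^ 2) ∂μ
  linear_combination (2 * lam * D + N / 2 * E) * hkey
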